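/- Let A, B, C be random variables taking finitely many values on a probability space with measure π, and let E be an event with π(E) = p > 0. Then I(A : B | C, E) ≤ (1/p) · ( I(A : B | C) + H(p) ), where I(A : B | C, E) denotes the conditional mutual information of A and B given C computed with respect to the conditional measure π(· | E), I(A : B | C) is computed with respect to π, and H is the binary entropy function. -/

import Mathlib

open MeasureTheory ProbabilityTheory

/-- Discrete conditional Shannon entropy `H(A ∣ C)` (in bits) of finitely-valued random
variables with respect to a measure `π`:
`H(A ∣ C) = Σ_{a,c} −π(A = a, C = c)·log₂( π(A = a, C = c)/π(C = c) )`. -/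
noncomputable def condEnt {Ω S T : Type*} [MeasurableSpace Ω] [Fintype S] [Fintype T]
    (π : Measure Ω) (A : Ω → S) (C : Ω → T) : ℝ :=
  ∑ a : S, ∑ c : T,
    -((π ({ω | A ω = a} ∩ {ω | C ω = c})).toReal *
      Real.logb 2
        ((π ({ω | A ω = a} ∩ {ω | C ω = c})).toReal / (π {ω | C ω = c}).toReal))

/-- Discrete conditional mutual information `I(A : B ∣ C) = H(A ∣ C) − H(A ∣ B, C)` (in bits). -/
noncomputable def condMI {Ω S T U : Type*} [MeasurableSpace Ω]
    [Fintype S] [Fintype T] [Fintype U]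
    (π : Measure Ω) (A : Ω → S) (B : Ω → T) (C : Ω → U) : ℝ :=
  condEnt π A C - condEnt π A (fun ω => (B ω, C ω))

/-- The binary entropy function, `H(p) = p·log₂(1/p) + (1−p)·log₂(1/(1−p))`,
with `H 0 = H 1 = 0` under the conventions of `Real.logb`. -/
noncomputable def binEnt (p : ℝ) : ℝ :=
  p * Real.logb 2 (1 / p) + (1 - p) * Real.logb 2 (1 / (1 - p))

open scoped ENNReal

section lemmas
variable {Ω S T U V : Type*} [MeasurableSpace Ω]

lemma pair_fiber (X : Ω → S) (Y : Ω → T) (x : S) (y : T) :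
    {ω | (X ω, Y ω) = (x, y)} = {ω | X ω = x} ∩ {ω | Y ω = y} := by
  ext ω; simp [Prod.ext_iff]

lemma sum_meas_fiber [Fintype S] (μ : Measure Ω) [IsFiniteMeasure μ]
    (X : Ω → S) (hX : ∀ x, MeasurableSet {ω | X ω = x})
    (s : Set Ω) (hs : MeasurableSet s) :
    ∑ x, (μ ({ω | X ω = x} ∩ s)).toReal = (μ s).toReal := by
  rw [← ENNReal.toReal_sum (fun _ _ => measure_ne_top μ _)]
  congr 1
  have hU : s = ⋃ x, ({ω | X ω = x} ∩ s) := by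
    ext ω; simp
  have hdisj : Pairwise (Function.onFun Disjoint fun x => {ω | X ω = x} ∩ s) := by
    intro x x' hxx'
    exact Set.disjoint_left.mpr fun ω hω hω' => hxx' (hω.1.symm.trans hω'.1)
  conv_rhs => rw [hU]
  rw [measure_iUnion hdisj (fun x => (hX x).inter hs), tsum_fintype]

lemma condEnt_nonneg [Fintype S] [Fintype T] (μ : Measure Ω) [IsFiniteMeasure μ]
    (X : Ω → S) (W : Ω → T) : 0 ≤ condEnt μ X W := by
  refine Finset.sum_nonneg fun x _ => Finset.sum_nonneg fun w _ => ?_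
  set m := (μ ({ω | X ω = x} ∩ {ω | W ω = w})).toReal with hm
  set n := (μ {ω | W ω = w}).toReal with hn
  have hm0 : 0 ≤ m := ENNReal.toReal_nonneg
  have hmn : m ≤ n := by
    apply ENNReal.toReal_mono (measure_ne_top μ _)
    exact measure_mono Set.inter_subset_right
  rcases eq_or_lt_of_le hm0 with h | h
  · simp [← h]
  · have hn0 : 0 < n := lt_of_lt_of_le h hmn
    have hlog : Real.logb 2 (m / n) ≤ 0 :=
      Real.logb_nonpos (by norm_num) (by positivity) (by
        rw [div_le_one hn0]; exact hmn)
    have := mul_nonpos_of_nonneg_of_nonpos hm0 hlog  -- maybe wrong name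
    linarith

lemma condEnt_reindex_cond [Fintype S] [Fintype T] [Fintype U] (μ : Measure Ω)
    (X : Ω → S) (W : Ω → T) (e : T ≃ U) :
    condEnt μ X (fun ω => e (W ω)) = condEnt μ X W := by
  unfold condEnt
  refine Finset.sum_congr rfl fun x _ => ?_
  rw [← Equiv.sum_comp e]
  refine Finset.sum_congr rfl fun w _ => ?_
  have h : {ω | e (W ω) = e w} = {ω | W ω = w} := by
    ext ω; simp [e.injective.eq_iff]
  rw [h]

lemma condEnt_reindex_fst [Fintype S] [Fintype T] [Fintype U] (μ : Measure Ω)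
    (X : Ω → S) (W : Ω → U) (e : S ≃ T) :
    condEnt μ (fun ω => e (X ω)) W = condEnt μ X W := by
  unfold condEnt
  rw [← Equiv.sum_comp e]
  refine Finset.sum_congr rfl fun x _ => ?_
  refine Finset.sum_congr rfl fun w _ => ?_
  have h : {ω | e (X ω) = e x} = {ω | X ω = x} := by
    ext ω; simp [e.injective.eq_iff]
  rw [h]

lemma ent_split (m k n : ℝ) (hm0 : 0 ≤ m) (hmk : m ≤ k) (hkn : k ≤ n) :
    -(m * Real.logb 2 (m / n)) =
      -(m * Real.logb 2 (k / n)) + -(m * Real.logb 2 (m / k)) := by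
  rcases eq_or_lt_of_le hm0 with h | hmpos
  · simp [← h]
  · have hkpos : 0 < k := lt_of_lt_of_le hmpos hmk
    have hnpos : 0 < n := lt_of_lt_of_le hkpos hkn
    have hprod : m / n = (k / n) * (m / k) := by field_simp
    rw [hprod, Real.logb_mul (by positivity) (by positivity)]
    ring

lemma condEnt_chain [Fintype S] [Fintype T] [Fintype U] (μ : Measure Ω) [IsFiniteMeasure μ]
    (X : Ω → S) (Y : Ω → T) (W : Ω → U)
    (hX : ∀ x, MeasurableSet {ω | X ω = x})
    (hY : ∀ y, MeasurableSet {ω | Y ω = y})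
    (hW : ∀ w, MeasurableSet {ω | W ω = w}) :
    condEnt μ (fun ω => (X ω, Y ω)) W
      = condEnt μ Y W + condEnt μ X (fun ω => (Y ω, W ω)) := by
  have hM : ∀ (y : T) (w : U), (μ ({ω | Y ω = y} ∩ {ω | W ω = w})).toReal
      = ∑ x, (μ ({ω | X ω = x} ∩ ({ω | Y ω = y} ∩ {ω | W ω = w}))).toReal :=
    fun y w => (sum_meas_fiber μ X hX _ ((hY y).inter (hW w))).symm
  have h1 : condEnt μ (fun ω => (X ω, Y ω)) W
      = ∑ x, ∑ y, ∑ w,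
        -((μ ({ω | X ω = x} ∩ ({ω | Y ω = y} ∩ {ω | W ω = w}))).toReal *
          Real.logb 2 ((μ ({ω | X ω = x} ∩ ({ω | Y ω = y} ∩ {ω | W ω = w}))).toReal /
            (μ {ω | W ω = w}).toReal)) := by
    unfold condEnt
    rw [Fintype.sum_prod_type]
    refine Finset.sum_congr rfl fun x _ => Finset.sum_congr rfl fun y _ =>
      Finset.sum_congr rfl fun w _ => ?_
    rw [pair_fiber, Set.inter_assoc]
  have h3 : condEnt μ X (fun ω => (Y ω, W ω))
      = ∑ x, ∑ y, ∑ w,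
        -((μ ({ω | X ω = x} ∩ ({ω | Y ω = y} ∩ {ω | W ω = w}))).toReal *
          Real.logb 2 ((μ ({ω | X ω = x} ∩ ({ω | Y ω = y} ∩ {ω | W ω = w}))).toReal /
            (μ ({ω | Y ω = y} ∩ {ω | W ω = w})).toReal)) := by
    unfold condEnt
    refine Finset.sum_congr rfl fun x _ => ?_
    rw [Fintype.sum_prod_type]
    refine Finset.sum_congr rfl fun y _ => Finset.sum_congr rfl fun w _ => ?_
    rw [pair_fiber]
  have h2 : condEnt μ Y W
      = ∑ y, ∑ w, ∑ x,
        -((μ ({ω | X ω = x} ∩ ({ω | Y ω = y} ∩ {ω | W ω = w}))).toReal *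
          Real.logb 2 ((μ ({ω | Y ω = y} ∩ {ω | W ω = w})).toReal /
            (μ {ω | W ω = w}).toReal)) := by
    unfold condEnt
    refine Finset.sum_congr rfl fun y _ => Finset.sum_congr rfl fun w _ => ?_
    symm
    rw [Finset.sum_neg_distrib, ← Finset.sum_mul, ← hM y w]
  have h2' : condEnt μ Y W
      = ∑ x, ∑ y, ∑ w,
        -((μ ({ω | X ω = x} ∩ ({ω | Y ω = y} ∩ {ω | W ω = w}))).toReal *
          Real.logb 2 ((μ ({ω | Y ω = y} ∩ {ω | W ω = w})).toReal /
            (μ {ω | W ω = w}).toReal)) := by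
    rw [h2]
    rw [show (∑ y : T, ∑ w : U, ∑ x : S,
        -((μ ({ω | X ω = x} ∩ ({ω | Y ω = y} ∩ {ω | W ω = w}))).toReal *
          Real.logb 2 ((μ ({ω | Y ω = y} ∩ {ω | W ω = w})).toReal /
            (μ {ω | W ω = w}).toReal)))
      = ∑ y : T, ∑ x : S, ∑ w : U,
        -((μ ({ω | X ω = x} ∩ ({ω | Y ω = y} ∩ {ω | W ω = w}))).toReal *
          Real.logb 2 ((μ ({ω | Y ω = y} ∩ {ω | W ω = w})).toReal /
            (μ {ω | W ω = w}).toReal))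
      from Finset.sum_congr rfl fun y _ => Finset.sum_comm]
    exact Finset.sum_comm
  rw [h1, h2', h3, ← Finset.sum_add_distrib]
  refine Finset.sum_congr rfl fun x _ => ?_
  rw [← Finset.sum_add_distrib]
  refine Finset.sum_congr rfl fun y _ => ?_
  rw [← Finset.sum_add_distrib]
  refine Finset.sum_congr rfl fun w _ => ?_
  refine ent_split _ _ _ ENNReal.toReal_nonneg ?_ ?_
  · exact ENNReal.toReal_mono (measure_ne_top μ _) (measure_mono Set.inter_subset_right)
  · exact ENNReal.toReal_mono (measure_ne_top μ _) (measure_mono Set.inter_subset_right)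


-- Gibbs

lemma gibbs {S T : Type*} [Fintype S] [Fintype T]
    (m : S → T → ℝ) (p : S → ℝ) (k : T → ℝ) (n : ℝ)
    (hm : ∀ a b, 0 ≤ m a b)
    (hp : ∀ a, p a = ∑ b, m a b) (hk : ∀ b, k b = ∑ a, m a b)
    (hn : n = ∑ a, p a) :
    ∑ a, ∑ b, -(m a b * Real.logb 2 (m a b / k b)) ≤
      ∑ a, -(p a * Real.logb 2 (p a / n)) := by
  have hp0 : ∀ a, 0 ≤ p a := fun a => by
    rw [hp]; exact Finset.sum_nonneg fun b _ => hm a b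
  have hk0 : ∀ b, 0 ≤ k b := fun b => by
    rw [hk]; exact Finset.sum_nonneg fun a _ => hm a b
  have hn0 : 0 ≤ n := by rw [hn]; exact Finset.sum_nonneg fun a _ => hp0 a
  have hkn : ∑ b, k b = n := by
    rw [hn]; simp only [hk, hp]; exact Finset.sum_comm
  have hlog2 : (0:ℝ) < Real.log 2 := Real.log_pos (by norm_num)
  have hRHS : ∑ a, -(p a * Real.logb 2 (p a / n))
      = ∑ a, ∑ b, -(m a b * Real.logb 2 (p a / n)) := by
    refine Finset.sum_congr rfl fun a _ => ?_
    rw [hp, Finset.sum_mul, ← Finset.sum_neg_distrib]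
  rw [hRHS, ← sub_nonneg, ← Finset.sum_sub_distrib]
  have hterm : ∀ a b,
      (m a b - p a * k b / n) / Real.log 2 ≤
        -(m a b * Real.logb 2 (p a / n)) - -(m a b * Real.logb 2 (m a b / k b)) := by
    intro a b
    rcases eq_or_lt_of_le (hm a b) with hm0 | hmpos
    · rw [← hm0]
      have hq0 : 0 ≤ p a * k b / n := by
        rcases eq_or_lt_of_le hn0 with h | h
        · rw [← h]; simp
        · exact div_nonneg (mul_nonneg (hp0 a) (hk0 b)) hn0
      have : (0 - p a * k b / n) / Real.log 2 ≤ 0 :=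
        div_nonpos_of_nonpos_of_nonneg (by linarith) hlog2.le
      simpa using this
    · have hPpos : 0 < p a := lt_of_lt_of_le hmpos (by
        rw [hp]; exact Finset.single_le_sum (fun b _ => hm a b) (Finset.mem_univ b))
      have hKpos : 0 < k b := lt_of_lt_of_le hmpos (by
        rw [hk]; exact Finset.single_le_sum (fun a _ => hm a b) (Finset.mem_univ a))
      have hnpos : 0 < n := lt_of_lt_of_le hPpos (by
        rw [hn]; exact Finset.single_le_sum (fun a _ => hp0 a) (Finset.mem_univ a))
      obtain ⟨q, hq⟩ : ∃ q : ℝ, q = p a * k b / n := ⟨_, rfl⟩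
      have hqpos : 0 < q := by rw [hq]; positivity
      have key : 1 - q / m a b ≤ Real.log (m a b / q) := by
        have h1 := Real.log_le_sub_one_of_pos (show (0:ℝ) < q / m a b by positivity)
        have hinv : Real.log (q / m a b) = - Real.log (m a b / q) := by
          rw [← Real.log_inv]; congr 1; rw [inv_div]
        rw [hinv] at h1; linarith
      have key2 : m a b - q ≤ m a b * Real.log (m a b / q) := by
        have h := mul_le_mul_of_nonneg_left key hmpos.le
        have hexp : m a b * (1 - q / m a b) = m a b - q := by
          rw [mul_sub, mul_one, mul_div_cancel₀ _ (ne_of_gt hmpos)]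
        linarith
      have hlogsplit : Real.logb 2 (m a b / k b) - Real.logb 2 (p a / n)
          = Real.log (m a b / q) / Real.log 2 := by
        rw [Real.logb, Real.logb, div_sub_div_same]
        congr 1
        rw [← Real.log_div (by positivity) (by positivity)]
        congr 1
        rw [hq]
        field_simp
      have hrw : -(m a b * Real.logb 2 (p a / n)) - -(m a b * Real.logb 2 (m a b / k b))
          = m a b * (Real.logb 2 (m a b / k b) - Real.logb 2 (p a / n)) := by ring
      rw [hrw, hlogsplit, ← mul_div_assoc, ← hq]
      gcongr
  refine Finset.sum_nonneg fun a _ => ?_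
  rw [← Finset.sum_sub_distrib]
  have h0 : ∑ b, (m a b - p a * k b / n) / Real.log 2 = 0 := by
    rcases eq_or_lt_of_le hn0 with h | hnpos
    · have hpz : p a = 0 := le_antisymm (by
        rw [hn] at h
        have := Finset.single_le_sum (fun a _ => hp0 a) (Finset.mem_univ a)
        linarith) (hp0 a)
      have hmz : ∀ b, m a b = 0 := fun b => le_antisymm (by
        have := hpz; rw [hp] at this
        have h2 := Finset.single_le_sum (fun b _ => hm a b) (Finset.mem_univ b)
        linarith) (hm a b)
      simp [hmz, hpz]
    · rw [← Finset.sum_div]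
      rw [Finset.sum_sub_distrib, ← hp]
      have hqsum : ∑ b, p a * k b / n = p a := by
        rw [← Finset.sum_div, ← Finset.mul_sum, hkn,
          mul_div_assoc, div_self (ne_of_gt hnpos), mul_one]
      rw [hqsum, sub_self, zero_div]
  rw [← h0]
  exact Finset.sum_le_sum fun b _ => hterm a b

lemma condMI_nonneg [Fintype S] [Fintype T] [Fintype U] (μ : Measure Ω) [IsFiniteMeasure μ]
    (A : Ω → S) (B : Ω → T) (C : Ω → U)
    (hA : ∀ a, MeasurableSet {ω | A ω = a})
    (hB : ∀ b, MeasurableSet {ω | B ω = b})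
    (hC : ∀ c, MeasurableSet {ω | C ω = c}) :
    0 ≤ condMI μ A B C := by
  have key : condEnt μ A (fun ω => (B ω, C ω)) ≤ condEnt μ A C := by
    have hL : condEnt μ A (fun ω => (B ω, C ω))
        = ∑ c, ∑ a, ∑ b,
          -((μ ({ω | A ω = a} ∩ ({ω | B ω = b} ∩ {ω | C ω = c}))).toReal *
            Real.logb 2 ((μ ({ω | A ω = a} ∩ ({ω | B ω = b} ∩ {ω | C ω = c}))).toReal /
              (μ ({ω | B ω = b} ∩ {ω | C ω = c})).toReal)) := by
      unfold condEnt
      have step1 : ∀ a : S, (∑ p : T × U,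
          -((μ ({ω | A ω = a} ∩ {ω | (B ω, C ω) = p})).toReal *
            Real.logb 2 ((μ ({ω | A ω = a} ∩ {ω | (B ω, C ω) = p})).toReal /
              (μ {ω | (B ω, C ω) = p}).toReal)))
          = ∑ b : T, ∑ c : U,
          -((μ ({ω | A ω = a} ∩ ({ω | B ω = b} ∩ {ω | C ω = c}))).toReal *
            Real.logb 2 ((μ ({ω | A ω = a} ∩ ({ω | B ω = b} ∩ {ω | C ω = c}))).toReal /
              (μ ({ω | B ω = b} ∩ {ω | C ω = c})).toReal)) := by
        intro a
        rw [Fintype.sum_prod_type]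
        refine Finset.sum_congr rfl fun b _ => Finset.sum_congr rfl fun c _ => ?_
        rw [pair_fiber]
      rw [Finset.sum_congr rfl fun a _ => step1 a]
      rw [Finset.sum_congr rfl fun a (_ : a ∈ Finset.univ) => (Finset.sum_comm : _ )]
      exact Finset.sum_comm
    have hR : condEnt μ A C
        = ∑ c, ∑ a,
          -((μ ({ω | A ω = a} ∩ {ω | C ω = c})).toReal *
            Real.logb 2 ((μ ({ω | A ω = a} ∩ {ω | C ω = c})).toReal /
              (μ {ω | C ω = c}).toReal)) := by
      unfold condEnt; exact Finset.sum_comm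
    rw [hL, hR]
    refine Finset.sum_le_sum fun c _ => ?_
    refine gibbs _ _ _ _ (fun a b => ENNReal.toReal_nonneg) ?_ ?_ ?_
    · intro a
      rw [← sum_meas_fiber μ B hB _ ((hA a).inter (hC c))]
      refine Finset.sum_congr rfl fun b _ => ?_
      rw [Set.inter_left_comm]
    · intro b
      exact (sum_meas_fiber μ A hA _ ((hB b).inter (hC c))).symm
    · exact (sum_meas_fiber μ A hA _ (hC c)).symm
  unfold condMI
  linarith

lemma condEnt_smul [Fintype S] [Fintype T] (μ : Measure Ω)
    (X : Ω → S) (W : Ω → T) (c : ℝ≥0∞) (hc : c ≠ ⊤) (hc0 : c ≠ 0) :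
    condEnt (c • μ) X W = c.toReal * condEnt μ X W := by
  unfold condEnt
  rw [Finset.mul_sum]
  refine Finset.sum_congr rfl fun x _ => ?_
  rw [Finset.mul_sum]
  refine Finset.sum_congr rfl fun w _ => ?_
  have hct : c.toReal ≠ 0 := ENNReal.toReal_ne_zero.mpr ⟨hc0, hc⟩
  simp only [Measure.smul_apply, smul_eq_mul, ENNReal.toReal_mul]
  rw [mul_div_mul_left _ _ hct]
  ring

lemma condMI_smul [Fintype S] [Fintype T] [Fintype U] (μ : Measure Ω)
    (A : Ω → S) (B : Ω → T) (C : Ω → U) (c : ℝ≥0∞) (hc : c ≠ ⊤) (hc0 : c ≠ 0) :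
    condMI (c • μ) A B C = c.toReal * condMI μ A B C := by
  unfold condMI
  rw [condEnt_smul μ A C c hc hc0, condEnt_smul μ A _ c hc hc0]
  ring

lemma condEnt_split [Fintype S] [Fintype V'] (μ : Measure Ω) [IsFiniteMeasure μ]
    (A : Ω → S) (V : Ω → V') (E : Set Ω) (hE : MeasurableSet E)
    (Z : Ω → Bool) (hZt : {ω | Z ω = true} = E) (hZf : {ω | Z ω = false} = Eᶜ)
    (hA : ∀ a, MeasurableSet {ω | A ω = a})
    (hV : ∀ v, MeasurableSet {ω | V ω = v}) :
    condEnt μ A (fun ω => (Z ω, V ω))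
      = condEnt (μ.restrict E) A V + condEnt (μ.restrict Eᶜ) A V := by
  unfold condEnt
  rw [← Finset.sum_add_distrib]
  refine Finset.sum_congr rfl fun a _ => ?_
  rw [Fintype.sum_prod_type, Fintype.sum_bool]
  have hset : ∀ (z : Bool) (v : V') (G : Set Ω), {ω | Z ω = z} = G →
      {ω | A ω = a} ∩ {ω | (Z ω, V ω) = (z, v)} = ({ω | A ω = a} ∩ {ω | V ω = v}) ∩ G ∧
      {ω | (Z ω, V ω) = (z, v)} = {ω | V ω = v} ∩ G := by
    intro z v G hG
    constructor
    · rw [pair_fiber, ← hG]; ext ω; simp [Set.mem_setOf_eq]; tauto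
    · rw [pair_fiber, ← hG]; exact Set.inter_comm _ _
  have htrue : ∀ v : V',
      (μ ({ω | A ω = a} ∩ {ω | (Z ω, V ω) = (true, v)}) =
        (μ.restrict E) ({ω | A ω = a} ∩ {ω | V ω = v})) ∧
      (μ {ω | (Z ω, V ω) = (true, v)} = (μ.restrict E) {ω | V ω = v}) := by
    intro v
    obtain ⟨h1, h2⟩ := hset true v E hZt
    rw [h1, h2, Measure.restrict_apply ((hA a).inter (hV v)),
      Measure.restrict_apply (hV v)]
    exact ⟨rfl, rfl⟩
  have hfalse : ∀ v : V',
      (μ ({ω | A ω = a} ∩ {ω | (Z ω, V ω) = (false, v)}) =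
        (μ.restrict Eᶜ) ({ω | A ω = a} ∩ {ω | V ω = v})) ∧
      (μ {ω | (Z ω, V ω) = (false, v)} = (μ.restrict Eᶜ) {ω | V ω = v}) := by
    intro v
    obtain ⟨h1, h2⟩ := hset false v Eᶜ hZf
    rw [h1, h2, Measure.restrict_apply ((hA a).inter (hV v)),
      Measure.restrict_apply (hV v)]
    exact ⟨rfl, rfl⟩
  congr 1
  · refine Finset.sum_congr rfl fun v _ => ?_
    rw [(htrue v).1, (htrue v).2]
  · refine Finset.sum_congr rfl fun v _ => ?_
    rw [(hfalse v).1, (hfalse v).2]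

end lemmas


/-- **Conditioning on an event barely affects mutual information.**
Let `A, B, C` be finitely-valued random variables and `E` an event with `π(E) = p > 0`.
Then `I(A : B ∣ C, E) ≤ (1/p)·( I(A : B ∣ C) + H(p) )`, where the left-hand side is computed
with respect to the conditional measure `π[|E]`. -/
theorem stmt11 {Ω S T U : Type*} [MeasurableSpace Ω] [Fintype S] [Fintype T] [Fintype U]
    (π : Measure Ω) [IsProbabilityMeasure π]
    (A : Ω → S) (B : Ω → T) (C : Ω → U)
    (hA : ∀ a, MeasurableSet {ω | A ω = a})
    (hB : ∀ b, MeasurableSet {ω | B ω = b})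
    (hC : ∀ c, MeasurableSet {ω | C ω = c})
    (E : Set Ω) (hE : MeasurableSet E)
    (p : ℝ) (hp : (π E).toReal = p) (hp0 : 0 < p) :
    condMI (π[|E]) A B C ≤ (1 / p) * (condMI π A B C + binEnt p) := by
  classical
  set Z : Ω → Bool := fun ω => if ω ∈ E then true else false with hZ
  have hZt : {ω | Z ω = true} = E := by
    ext ω; by_cases h : ω ∈ E <;> simp [hZ, h]
  have hZf : {ω | Z ω = false} = Eᶜ := by
    ext ω; by_cases h : ω ∈ E <;> simp [hZ, h]
  have hZm : ∀ z, MeasurableSet {ω | Z ω = z} := by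
    intro z
    cases z
    · rw [hZf]; exact hE.compl
    · rw [hZt]; exact hE
  have hBC : ∀ q : T × U, MeasurableSet {ω | (B ω, C ω) = q} := fun q => by
    rw [pair_fiber]; exact (hB q.1).inter (hC q.2)
  have hZC : ∀ q : Bool × U, MeasurableSet {ω | (Z ω, C ω) = q} := fun q => by
    rw [pair_fiber]; exact (hZm q.1).inter (hC q.2)
  have hπE : π E ≠ ⊤ := measure_ne_top π E
  have hπE0 : π E ≠ 0 := by
    intro h; rw [h] at hp; simp at hp; linarith
  have hinv_ne_top : (π E)⁻¹ ≠ ⊤ := ENNReal.inv_ne_top.mpr hπE0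
  have hinv_ne_zero : (π E)⁻¹ ≠ 0 := ENNReal.inv_ne_zero.mpr hπE
  -- Step 1: scaling
  have h1 : condMI (π[|E]) A B C = p⁻¹ * condMI (π.restrict E) A B C := by
    have : π[|E] = ((π E)⁻¹ • π.restrict E) := rfl
    rw [this, condMI_smul _ A B C _ hinv_ne_top hinv_ne_zero, ENNReal.toReal_inv, hp]
  -- Step 2: nonnegativity on the complement
  have h2 : 0 ≤ condMI (π.restrict Eᶜ) A B C := condMI_nonneg _ A B C hA hB hC
  -- reindex equivalence  T × (Bool × U) ≃ Bool × (T × U)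
  let e : (T × (Bool × U)) ≃ (Bool × (T × U)) :=
    ⟨fun q => (q.2.1, (q.1, q.2.2)), fun q => (q.2.1, (q.1, q.2.2)),
      fun q => rfl, fun q => rfl⟩
  have he : condEnt π A (fun ω => (Z ω, (B ω, C ω)))
      = condEnt π A (fun ω => (B ω, (Z ω, C ω))) :=
    condEnt_reindex_cond π A (fun ω => (B ω, (Z ω, C ω))) e
  -- Step 3: splitting
  have h3 : condMI (π.restrict E) A B C + condMI (π.restrict Eᶜ) A B C
      = condMI π A B (fun ω => (Z ω, C ω)) := by
    simp only [condMI]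
    rw [condEnt_split π A C E hE Z hZt hZf hA hC]
    rw [show condEnt π A (fun ω => (B ω, (Z ω, C ω)))
        = condEnt π A (fun ω => (Z ω, (B ω, C ω))) from he.symm]
    rw [condEnt_split π A (fun ω => (B ω, C ω)) E hE Z hZt hZf hA hBC]
    ring
  -- Step 4 ingredients
  have hi : condEnt π A (fun ω => (Z ω, C ω)) ≤ condEnt π A C := by
    have := condMI_nonneg π A Z C hA hZm hC
    unfold condMI at this; linarith
  have hCR1 : condEnt π (fun ω => (Z ω, A ω)) (fun ω => (B ω, C ω))
      = condEnt π A (fun ω => (B ω, C ω))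
        + condEnt π Z (fun ω => (A ω, (B ω, C ω))) :=
    condEnt_chain π Z A (fun ω => (B ω, C ω)) hZm hA hBC
  have hCR2 : condEnt π (fun ω => (A ω, Z ω)) (fun ω => (B ω, C ω))
      = condEnt π Z (fun ω => (B ω, C ω))
        + condEnt π A (fun ω => (Z ω, (B ω, C ω))) :=
    condEnt_chain π A Z (fun ω => (B ω, C ω)) hA hZm hBC
  have hswap : condEnt π (fun ω => (Z ω, A ω)) (fun ω => (B ω, C ω))
      = condEnt π (fun ω => (A ω, Z ω)) (fun ω => (B ω, C ω)) :=
    (condEnt_reindex_fst π (fun ω => (A ω, Z ω)) (fun ω => (B ω, C ω))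
      (Equiv.prodComm S Bool)).symm ▸ rfl
  have hd : 0 ≤ condEnt π Z (fun ω => (A ω, (B ω, C ω))) := condEnt_nonneg π _ _
  -- H(Z) = binEnt p
  have hZconst : condEnt π Z (fun _ : Ω => ()) = binEnt p := by
    unfold condEnt binEnt
    have huniv : {ω : Ω | (fun _ : Ω => ()) ω = ()} = Set.univ := by
      ext ω; simp
    have hcompl : (π Eᶜ).toReal = 1 - p := by
      rw [measure_compl hE (measure_ne_top π E), measure_univ,
        ENNReal.toReal_sub_of_le prob_le_one ENNReal.one_ne_top, ENNReal.toReal_one, hp]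
    rw [Fintype.sum_bool]
    simp only [huniv, Set.setOf_true, Set.inter_univ, measure_univ, ENNReal.toReal_one,
      Finset.univ_unique, Finset.sum_singleton, hZt, hZf]
    rw [hp, hcompl]
    simp only [div_one, one_div, Real.logb_inv]
    ring
  have hee : condEnt π Z (fun ω => ((B ω, C ω), ()))
      = condEnt π Z (fun ω => (B ω, C ω)) := by
    exact condEnt_reindex_cond π Z (fun ω => (B ω, C ω))
      ⟨fun a => (a, ()), fun q => q.1, fun _ => rfl, fun _ => rfl⟩
  have heZ : condEnt π Z (fun ω => (B ω, C ω)) ≤ binEnt p := by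
    have h := condMI_nonneg π Z (fun ω => (B ω, C ω)) (fun _ : Ω => ()) hZm hBC
      (fun u => by
        have : {ω : Ω | (fun _ : Ω => ()) ω = u} = Set.univ := by ext ω; simp
        rw [this]; exact MeasurableSet.univ)
    unfold condMI at h
    rw [hZconst] at h
    rw [← hee]
    linarith
  -- Step 4
  have h4 : condMI π A B (fun ω => (Z ω, C ω)) ≤ condMI π A B C + binEnt p := by
    simp only [condMI]
    have hkey : condEnt π A (fun ω => (B ω, C ω)) - binEnt p
        ≤ condEnt π A (fun ω => (B ω, (Z ω, C ω))) := by
      rw [← he]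
      have := hswap ▸ hCR1
      linarith [hCR1, hCR2, hswap, hd, heZ]
    linarith [hi, hkey]
  -- assemble
  have hpinv : (0:ℝ) ≤ p⁻¹ := by positivity
  calc condMI (π[|E]) A B C = p⁻¹ * condMI (π.restrict E) A B C := h1
    _ ≤ p⁻¹ * (condMI (π.restrict E) A B C + condMI (π.restrict Eᶜ) A B C) := by
        apply mul_le_mul_of_nonneg_left _ hpinv
        linarith
    _ = p⁻¹ * condMI π A B (fun ω => (Z ω, C ω)) := by rw [h3]
    _ ≤ p⁻¹ * (condMI π A B C + binEnt p) := mul_le_mul_of_nonneg_left h4 hpinv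
    _ = (1 / p) * (condMI π A B C + binEnt p) := by rw [one_div]
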